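/- Let D ≥ 2, N ≥ 1, and r ∈ [1,∞). There is a constant C = C(D, r) such that for every L ≥ 0, every L-Lipschitz function g : ℝ^{D−1} → ℝ^N, every j ∈ ℕ, ε > 0, and every x₀ = (x_0, x) ∈ ℝ^D: ∫_{ℝ^{D−1}} |g(x) − g(y)|^r (χ^{j,ε}_y(x₀))^r dy ≤ C L^r 2^{εj((D−1)(r−1) − r)}. -/

import Mathlib

open MeasureTheory

/-- The Gaussian window `χ̃^{j,ε}_y(x₀, x)` on `ℝ × ℝ^{D-1}` (here `d = D - 1`). -/
noncomputable def chiTilde (d j : ℕ) (ε : ℝ) (y : EuclideanSpace ℝ (Fin d))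
    (x0 : ℝ) (x : EuclideanSpace ℝ (Fin d)) : ℝ :=
  Real.pi ^ (-((d : ℝ) + 1) / 4) * Real.exp (-x0 ^ 2 / 2) *
    (2 : ℝ) ^ (ε * (j : ℝ) * (d : ℝ) / 2) *
    ∏ k : Fin d, Real.exp (-(2 : ℝ) ^ (2 * ε * (j : ℝ)) * (x k - y k) ^ 2 / 2)

/-- The Gaussian window `χ^{j,ε}_y = (χ̃^{j,ε}_y)²`. -/
noncomputable def chiW (d j : ℕ) (ε : ℝ) (y : EuclideanSpace ℝ (Fin d))
    (x0 : ℝ) (x : EuclideanSpace ℝ (Fin d)) : ℝ :=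
  (chiTilde d j ε y x0 x) ^ 2

/-- The standard Gaussian is integrable on Euclidean space. -/
lemma gaussIntegrableAux (d : ℕ) {b : ℝ} (hb : 0 < b) :
    Integrable (fun v : EuclideanSpace ℝ (Fin d) => Real.exp (-b * ‖v‖ ^ 2)) := by
  have h := (GaussianFourier.integrable_cexp_neg_mul_sq_norm_add (V := EuclideanSpace ℝ (Fin d))
    (b := (b : ℂ)) (by simpa using hb) 0 0).norm
  refine h.congr (Filter.Eventually.of_forall fun v => ?_)
  simp [Complex.norm_exp]
  norm_cast
  exact Or.inl rfl

lemma gaussIntegralAux (d : ℕ) (x : EuclideanSpace ℝ (Fin d)) {b : ℝ} (hb : 0 < b) :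
    ∫ y : EuclideanSpace ℝ (Fin d), Real.exp (-b * ‖x - y‖ ^ 2)
      = (Real.pi / b) ^ ((d : ℝ) / 2) := by
  rw [integral_sub_left_eq_self (fun v => Real.exp (-b * ‖v‖ ^ 2)) volume x]
  rw [GaussianFourier.integral_rexp_neg_mul_sq_norm hb]
  simp

lemma euclidNormSqAux (d : ℕ) (x y : EuclideanSpace ℝ (Fin d)) :
    ‖x - y‖ ^ 2 = ∑ k, (x k - y k) ^ 2 := by
  rw [EuclideanSpace.norm_eq, Real.sq_sqrt (by positivity)]
  simp [PiLp.sub_apply]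

set_option maxHeartbeats 1000000 in
/-- For `D = d + 1 ≥ 2`, `N ≥ 1`, `r ∈ [1,∞)` there is `C = C(D,r)` such
that for every `L`-Lipschitz `g : ℝ^{D-1} → ℝ^N` (`L ≥ 0`), all `j ∈ ℕ`, `ε > 0`, and
`x₀ = (x_0, x)`:
`∫_{ℝ^{D-1}} |g(x) - g(y)|^r (χ^{j,ε}_y(x₀))^r dy ≤ C L^r 2^{εj((D-1)(r-1) - r)}`. -/
theorem stmt10 (d N : ℕ) (hd : 1 ≤ d) (hN : 1 ≤ N) (r : ℝ) (hr : 1 ≤ r) :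
    ∃ C : ℝ, 0 < C ∧
      ∀ (L : ℝ), 0 ≤ L →
        ∀ g : EuclideanSpace ℝ (Fin d) → EuclideanSpace ℝ (Fin N),
          (∀ x y, ‖g x - g y‖ ≤ L * ‖x - y‖) →
          ∀ (j : ℕ) (ε : ℝ), 0 < ε →
            ∀ (x0 : ℝ) (x : EuclideanSpace ℝ (Fin d)),
              (∫⁻ y : EuclideanSpace ℝ (Fin d),
                  ENNReal.ofReal (‖g x - g y‖ ^ r * chiW d j ε y x0 x ^ r)) ≤
                ENNReal.ofReal
                  (C * L ^ r * (2 : ℝ) ^ (ε * (j : ℝ) * ((d : ℝ) * (r - 1) - r))) := by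
  have hr0 : (0:ℝ) ≤ r := le_trans zero_le_one hr
  refine ⟨Real.pi ^ (-((d : ℝ) + 1) * r / 2) * Real.exp (r ^ 2 / 2) *
      (2 * Real.pi) ^ ((d : ℝ) / 2), by positivity, ?_⟩
  intro L hL g hg j ε hε x0 x
  set a : ℝ := (2 : ℝ) ^ (ε * (j : ℝ)) with ha_def
  have ha : 0 < a := Real.rpow_pos_of_pos two_pos _
  set K : ℝ := Real.pi ^ (-((d : ℝ) + 1) * r / 2) * Real.exp (r ^ 2 / 2) * L ^ r *
      a ^ ((d : ℝ) * r - r) with hK_def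
  have hKnn : 0 ≤ K := by positivity
  have ha2 : (2 : ℝ) ^ (2 * ε * (j : ℝ)) = a ^ 2 := by
    rw [ha_def, ← Real.rpow_natCast ((2:ℝ) ^ (ε * (j:ℝ))) 2,
      ← Real.rpow_mul (by norm_num : (0:ℝ) ≤ 2)]
    norm_num; ring_nf
  -- pointwise bound
  have key : ∀ y : EuclideanSpace ℝ (Fin d),
      ‖g x - g y‖ ^ r * chiW d j ε y x0 x ^ r
        ≤ K * Real.exp (-(a ^ 2 / 2) * ‖x - y‖ ^ 2) := by
    intro y
    set t : ℝ := ‖x - y‖ with ht_def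
    have ht : 0 ≤ t := norm_nonneg _
    -- the product of exponentials
    have hP : (∏ k : Fin d, Real.exp (-(2 : ℝ) ^ (2 * ε * (j : ℝ)) * (x k - y k) ^ 2 / 2))
        = Real.exp (-(a ^ 2 / 2) * t ^ 2) := by
      rw [← Real.exp_sum]
      congr 1
      rw [ht_def, euclidNormSqAux, Finset.mul_sum]
      exact Finset.sum_congr rfl fun k _ => by rw [ha2]; ring
    have echi : chiW d j ε y x0 x =
        Real.pi ^ (-((d : ℝ) + 1) / 2) * Real.exp (-x0 ^ 2) *
          (2 : ℝ) ^ (ε * (j : ℝ) * (d : ℝ)) * Real.exp (-a ^ 2 * t ^ 2) := by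
      rw [chiW, chiTilde, hP, mul_pow, mul_pow, mul_pow]
      congr 1
      · congr 1
        · congr 1
          · rw [← Real.rpow_natCast (Real.pi ^ _) 2, ← Real.rpow_mul Real.pi_nonneg]
            congr 1; ring
          · rw [sq, ← Real.exp_add]; congr 1; ring
        · rw [← Real.rpow_natCast ((2:ℝ) ^ _) 2, ← Real.rpow_mul (by norm_num : (0:ℝ) ≤ 2)]
          congr 1; push_cast; ring
      · rw [sq, ← Real.exp_add]; congr 1; ring
    have hchiR : chiW d j ε y x0 x ^ r ≤
        Real.pi ^ (-((d : ℝ) + 1) * r / 2) * (a ^ ((d : ℝ) * r) *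
          Real.exp (-(r * a ^ 2) * t ^ 2)) := by
      rw [echi]
      rw [Real.mul_rpow (by positivity) (Real.exp_pos _).le,
        Real.mul_rpow (by positivity) (by positivity),
        Real.mul_rpow (by positivity) (Real.exp_pos _).le]
      rw [← Real.rpow_mul Real.pi_nonneg, ← Real.exp_mul, ← Real.exp_mul,
        ← Real.rpow_mul (by norm_num : (0:ℝ) ≤ 2)]
      have e1 : -((d : ℝ) + 1) / 2 * r = -((d : ℝ) + 1) * r / 2 := by ring
      have e2 : (2:ℝ) ^ (ε * (j:ℝ) * (d:ℝ) * r) = a ^ ((d:ℝ) * r) := by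
        rw [ha_def, ← Real.rpow_mul (by norm_num : (0:ℝ) ≤ 2)]
        congr 1; ring
      have e3 : -a ^ 2 * t ^ 2 * r = -(r * a ^ 2) * t ^ 2 := by ring
      rw [e1, e2, e3]
      have hb1 : Real.exp (-x0 ^ 2 * r) ≤ 1 :=
        Real.exp_le_one_iff.mpr (by nlinarith [sq_nonneg x0])
      have : Real.pi ^ (-((d : ℝ) + 1) * r / 2) * Real.exp (-x0 ^ 2 * r) *
            a ^ ((d:ℝ) * r) * Real.exp (-(r * a ^ 2) * t ^ 2)
          ≤ Real.pi ^ (-((d : ℝ) + 1) * r / 2) * 1 *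
            a ^ ((d:ℝ) * r) * Real.exp (-(r * a ^ 2) * t ^ 2) := by
        gcongr
      calc Real.pi ^ (-((d : ℝ) + 1) * r / 2) * Real.exp (-x0 ^ 2 * r) *
            a ^ ((d:ℝ) * r) * Real.exp (-(r * a ^ 2) * t ^ 2)
          ≤ Real.pi ^ (-((d : ℝ) + 1) * r / 2) * 1 *
            a ^ ((d:ℝ) * r) * Real.exp (-(r * a ^ 2) * t ^ 2) := this
        _ = Real.pi ^ (-((d : ℝ) + 1) * r / 2) * (a ^ ((d:ℝ) * r) *
            Real.exp (-(r * a ^ 2) * t ^ 2)) := by ring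
    -- the norm bound
    have hgn : ‖g x - g y‖ ^ r ≤ L ^ r * t ^ r := by
      rw [← Real.mul_rpow hL ht]
      exact Real.rpow_le_rpow (norm_nonneg _) (hg x y) hr0
    -- t^r bound
    have htr : t ^ r * Real.exp (-(r * a ^ 2) * t ^ 2)
        ≤ a ^ (-r) * Real.exp (r ^ 2 / 2) * Real.exp (-(a ^ 2 / 2) * t ^ 2) := by
      have h1 : (a * t) ^ r ≤ Real.exp (r ^ 2 / 2) * Real.exp ((a * t) ^ 2 / 2) := by
        have h2 : a * t ≤ Real.exp (a * t) := by
          have := Real.add_one_le_exp (a * t); linarith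
        calc (a * t) ^ r ≤ (Real.exp (a * t)) ^ r :=
              Real.rpow_le_rpow (by positivity) h2 hr0
          _ = Real.exp (a * t * r) := (Real.exp_mul _ _).symm
          _ ≤ Real.exp (r ^ 2 / 2 + (a * t) ^ 2 / 2) :=
              Real.exp_le_exp.mpr (by nlinarith [sq_nonneg (a * t - r)])
          _ = Real.exp (r ^ 2 / 2) * Real.exp ((a * t) ^ 2 / 2) := Real.exp_add _ _
      have ht2 : t ^ r = a ^ (-r) * (a * t) ^ r := by
        rw [Real.mul_rpow ha.le ht, ← mul_assoc, ← Real.rpow_add ha]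
        simp
      rw [ht2]
      calc a ^ (-r) * (a * t) ^ r * Real.exp (-(r * a ^ 2) * t ^ 2)
          ≤ a ^ (-r) * (Real.exp (r ^ 2 / 2) * Real.exp ((a * t) ^ 2 / 2)) *
            Real.exp (-(r * a ^ 2) * t ^ 2) := by
            gcongr
        _ = a ^ (-r) * Real.exp (r ^ 2 / 2) *
            Real.exp ((a * t) ^ 2 / 2 + -(r * a ^ 2) * t ^ 2) := by
            rw [Real.exp_add]; ring
        _ ≤ a ^ (-r) * Real.exp (r ^ 2 / 2) * Real.exp (-(a ^ 2 / 2) * t ^ 2) :=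
            mul_le_mul_of_nonneg_left
              (Real.exp_le_exp.mpr (by nlinarith [mul_nonneg (sq_nonneg a) (sq_nonneg t)]))
              (by positivity)
    calc ‖g x - g y‖ ^ r * chiW d j ε y x0 x ^ r
        ≤ (L ^ r * t ^ r) * (Real.pi ^ (-((d : ℝ) + 1) * r / 2) * (a ^ ((d : ℝ) * r) *
            Real.exp (-(r * a ^ 2) * t ^ 2))) := by
          exact mul_le_mul hgn hchiR
            (Real.rpow_nonneg (by rw [chiW]; positivity) r) (by positivity)
      _ = L ^ r * Real.pi ^ (-((d : ℝ) + 1) * r / 2) * a ^ ((d : ℝ) * r) *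
            (t ^ r * Real.exp (-(r * a ^ 2) * t ^ 2)) := by ring
      _ ≤ L ^ r * Real.pi ^ (-((d : ℝ) + 1) * r / 2) * a ^ ((d : ℝ) * r) *
            (a ^ (-r) * Real.exp (r ^ 2 / 2) * Real.exp (-(a ^ 2 / 2) * t ^ 2)) :=
          mul_le_mul_of_nonneg_left htr (by positivity)
      _ = K * Real.exp (-(a ^ 2 / 2) * t ^ 2) := by
          rw [hK_def]
          have : a ^ ((d : ℝ) * r) * a ^ (-r) = a ^ ((d : ℝ) * r - r) := by
            rw [← Real.rpow_add ha]; ring_nf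
          rw [← this]; ring
  -- integrate
  have hb : (0:ℝ) < a ^ 2 / 2 := by positivity
  have hint : Integrable (fun y : EuclideanSpace ℝ (Fin d) =>
      Real.exp (-(a ^ 2 / 2) * ‖x - y‖ ^ 2)) :=
    (gaussIntegrableAux d hb).comp_sub_left x
  have step1 : (∫⁻ y : EuclideanSpace ℝ (Fin d),
      ENNReal.ofReal (‖g x - g y‖ ^ r * chiW d j ε y x0 x ^ r))
      ≤ ENNReal.ofReal K * ∫⁻ y : EuclideanSpace ℝ (Fin d),
        ENNReal.ofReal (Real.exp (-(a ^ 2 / 2) * ‖x - y‖ ^ 2)) := by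
    rw [← lintegral_const_mul' _ _ ENNReal.ofReal_ne_top]
    refine lintegral_mono fun y => ?_
    rw [← ENNReal.ofReal_mul hKnn]
    exact ENNReal.ofReal_le_ofReal (key y)
  have step2 : (∫⁻ y : EuclideanSpace ℝ (Fin d),
      ENNReal.ofReal (Real.exp (-(a ^ 2 / 2) * ‖x - y‖ ^ 2)))
      = ENNReal.ofReal ((Real.pi / (a ^ 2 / 2)) ^ ((d : ℝ) / 2)) := by
    rw [← ofReal_integral_eq_lintegral_ofReal hint
      (Filter.Eventually.of_forall fun y => (Real.exp_pos _).le)]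
    rw [gaussIntegralAux d x hb]
  have hG : (Real.pi / (a ^ 2 / 2)) ^ ((d : ℝ) / 2)
      = (2 * Real.pi) ^ ((d : ℝ) / 2) * a ^ (-(d : ℝ)) := by
    have : Real.pi / (a ^ 2 / 2) = (2 * Real.pi) / a ^ 2 := by
      rw [div_div_eq_mul_div, mul_comm]
    rw [this, Real.div_rpow (by positivity) (by positivity)]
    rw [← Real.rpow_natCast a 2, ← Real.rpow_mul ha.le, div_eq_mul_inv,
      ← Real.rpow_neg ha.le]
    congr 1
    congr 1
    push_cast; ring
  have haa : a ^ ((d : ℝ) * r - r) * a ^ (-(d : ℝ))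
      = (2 : ℝ) ^ (ε * (j : ℝ) * ((d : ℝ) * (r - 1) - r)) := by
    rw [← Real.rpow_add ha, ha_def, ← Real.rpow_mul (by norm_num : (0:ℝ) ≤ 2)]
    congr 1; ring
  calc (∫⁻ y : EuclideanSpace ℝ (Fin d),
      ENNReal.ofReal (‖g x - g y‖ ^ r * chiW d j ε y x0 x ^ r))
      ≤ ENNReal.ofReal K * ENNReal.ofReal ((Real.pi / (a ^ 2 / 2)) ^ ((d : ℝ) / 2)) := by
        rw [← step2]; exact step1
    _ = ENNReal.ofReal (K * ((Real.pi / (a ^ 2 / 2)) ^ ((d : ℝ) / 2))) :=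
        (ENNReal.ofReal_mul hKnn).symm
    _ = ENNReal.ofReal (Real.pi ^ (-((d : ℝ) + 1) * r / 2) * Real.exp (r ^ 2 / 2) *
          (2 * Real.pi) ^ ((d : ℝ) / 2) * L ^ r *
          (2 : ℝ) ^ (ε * (j : ℝ) * ((d : ℝ) * (r - 1) - r))) := by
        congr 1
        rw [hG, hK_def, ← haa]
        ring
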